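/- Let k ≥ 1 and let f : ℝ → ℝ be a C^k bijection with f'(y) > 0 for all y (so that f⁻¹ is also C^k). Let K be a compact subset of (0,∞) × ℝ, and suppose that for every (p,q) ∈ K there exists m with 1 ≤ m ≤ k such that (−p)ᵐ·(f⁻¹)⁽ᵐ⁾(q) + f⁽ᵐ⁾(0)/p ≠ 0. Then there exists η > 0 such that for every (p,q) ∈ K, the displacement function V_{p,q}(y) = f⁻¹(q − p·y) + f(y)/p − q/p has at most k zeros in the interval [−η, η]. -/

import Mathlib

open Set Function Topology Metric

section aux
private lemma inv_contDiff (k : ℕ) (hk : 1 ≤ k) (f : ℝ → ℝ) (hf : ContDiff ℝ (k : ℕ∞) f)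
    (hbij : Function.Bijective f) (hpos : ∀ y : ℝ, 0 < deriv f y) :
    ContDiff ℝ (k : ℕ∞) (Function.invFun f) := by
  rw [contDiff_iff_contDiffAt]
  intro b
  obtain ⟨a, rfl⟩ := hbij.2 b
  have hone : ((k : ℕ∞) : WithTop ℕ∞) ≠ 0 := by
    have : k ≠ 0 := by omega
    exact_mod_cast this
  have hfa : ContDiffAt ℝ (k : ℕ∞) f a := hf.contDiffAt
  have hda : HasDerivAt f (deriv f a) a :=
    ((hf.differentiable hone) a).hasDerivAt
  have h0 : deriv f a ≠ 0 := (hpos a).ne'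
  have hfd := hda.hasFDerivAt_equiv h0
  have hinv := hfa.to_localInverse (f' := ContinuousLinearEquiv.unitsEquivAut ℝ
    (Units.mk0 _ h0)) hfd hone
  refine hinv.congr_of_eventuallyEq ?_
  have hev : ∀ᶠ y in 𝓝 (f a), f ((hfa.localInverse hfd hone) y) = y :=
    (hfa.hasStrictFDerivAt' hfd hone).eventually_right_inverse
  filter_upwards [hev] with y hy
  conv_lhs => rw [← hy]
  rw [Function.leftInverse_invFun hbij.1]


private lemma deriv_formula (m : ℕ) (hm : 1 ≤ m) (g f : ℝ → ℝ)
    (hg : ContDiff ℝ (m : ℕ∞) g) (hf : ContDiff ℝ (m : ℕ∞) f) (p q : ℝ) (y : ℝ) :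
    iteratedDeriv m (fun y => g (q - p * y) + f y / p - q / p) y
      = (-p) ^ m * iteratedDeriv m g (q - p * y) + iteratedDeriv m f y / p := by
  have hA : ContDiff ℝ (m : ℕ∞) (fun y : ℝ => g (q - p * y)) :=
    hg.comp (contDiff_const.sub (contDiff_const.mul contDiff_id))
  have hB : ContDiff ℝ (m : ℕ∞) (fun y : ℝ => -(q / p) + p⁻¹ * f y) :=
    contDiff_const.add (contDiff_const.mul hf)
  have e1 : (fun y : ℝ => g (q - p * y) + f y / p - q / p)
      = (fun y : ℝ => g (q - p * y)) + fun y : ℝ => -(q / p) + p⁻¹ * f y := by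
    funext y; simp only [Pi.add_apply]; ring
  rw [e1, ← iteratedDerivWithin_univ,
    iteratedDerivWithin_add (Set.mem_univ y) uniqueDiffOn_univ hA.contDiffWithinAt hB.contDiffWithinAt,
    iteratedDerivWithin_univ, iteratedDerivWithin_univ]
  congr 1
  · -- composition with affine map
    have e2 : (fun y : ℝ => g (q - p * y)) = fun y : ℝ => (fun z => g (q + z)) ((-p) * y) := by
      funext y; congr 1; ring
    have hgq : ContDiff ℝ (m : ℕ∞) (fun z : ℝ => g (q + z)) :=
      hg.comp (contDiff_const.add contDiff_id)
    rw [e2, iteratedDeriv_comp_const_mul hgq (-p), iteratedDeriv_comp_const_add]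
    ring_nf
  · rw [← iteratedDerivWithin_univ,
      iteratedDerivWithin_const_add hm _,
      iteratedDerivWithin_const_mul (Set.mem_univ y) uniqueDiffOn_univ _ hf.contDiffWithinAt,
      iteratedDerivWithin_univ]
    ring

private lemma no_tuple (m : ℕ) : ∀ h : ℝ → ℝ, ContDiff ℝ (m : ℕ∞) h → ∀ a b : ℝ,
    (∀ y ∈ Set.Icc a b, iteratedDeriv m h y ≠ 0) →
    ¬ ∃ x : Fin (m + 1) → ℝ, StrictMono x ∧ ∀ i, x i ∈ Set.Icc a b ∧ h (x i) = 0 := by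
  induction m with
  | zero =>
    rintro h _ a b hne ⟨x, -, hx⟩
    exact hne (x 0) (hx 0).1 (by simpa [iteratedDeriv_zero] using (hx 0).2)
  | succ m ih =>
    rintro h hh a b hne ⟨x, hmono, hx⟩
    have hd : ContDiff ℝ (m : ℕ∞) (deriv h) := by
      have h' : ContDiff ℝ ((m : WithTop ℕ∞) + 1) h := by exact_mod_cast hh
      have := (contDiff_succ_iff_deriv.mp h').2.2
      exact_mod_cast this
    have key : ∀ i : Fin (m + 1), ∃ c ∈ Set.Ioo (x i.castSucc) (x i.succ), deriv h c = 0 := by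
      intro i
      refine exists_deriv_eq_zero (hmono (Fin.castSucc_lt_succ (i := i)))
        hh.continuous.continuousOn ?_
      rw [(hx _).2, (hx _).2]
    choose c hc hc0 using key
    refine ih (deriv h) hd a b (fun y hy => ?_) ⟨c, ?_, fun i => ⟨⟨?_, ?_⟩, hc0 i⟩⟩
    · have := hne y hy
      rwa [iteratedDeriv_succ'] at this
    · intro i j hij
      calc c i < x i.succ := (hc i).2
        _ ≤ x j.castSucc := hmono.monotone (by
            simp only [Fin.le_def, Fin.val_succ, Fin.coe_castSucc]
            exact hij)
        _ < c j := (hc j).1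
    · exact le_trans (hx i.castSucc).1.1 (hc i).1.le
    · exact le_trans (hc i).2.le (hx i.succ).1.2

private lemma card_zeros (m : ℕ) (h : ℝ → ℝ) (hh : ContDiff ℝ (m : ℕ∞) h) (a b : ℝ)
    (hne : ∀ y ∈ Set.Icc a b, iteratedDeriv m h y ≠ 0) :
    Set.encard {y ∈ Set.Icc a b | h y = 0} ≤ (m : ℕ∞) := by
  by_contra hlt
  push_neg at hlt
  have h1 : ((m + 1 : ℕ) : ℕ∞) ≤ {y ∈ Set.Icc a b | h y = 0}.encard := by
    exact_mod_cast Order.add_one_le_of_lt hlt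
  obtain ⟨T, hTs, hTcard⟩ := Set.exists_subset_encard_eq h1
  have hTfin : T.Finite := Set.finite_of_encard_eq_coe hTcard
  have hcard : hTfin.toFinset.card = m + 1 := by
    have := hTfin.encard_eq_coe_toFinset_card
    rw [hTcard] at this
    exact_mod_cast this.symm
  set e := hTfin.toFinset.orderIsoOfFin hcard with he
  refine no_tuple m h hh a b hne ⟨fun i => (e i : ℝ), ?_, fun i => ?_⟩
  · intro i j hij
    exact e.strictMono hij
  · have : (e i : ℝ) ∈ T := by
      have := (e i).2
      rwa [Set.Finite.mem_toFinset] at this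
    exact ⟨(hTs this).1, (hTs this).2⟩
end aux

theorem finite_cyclicity (k : ℕ) (hk : 1 ≤ k) (f : ℝ → ℝ)
    (hf : ContDiff ℝ (k : ℕ∞) f) (hbij : Function.Bijective f)
    (hpos : ∀ y : ℝ, 0 < deriv f y)
    (K : Set (ℝ × ℝ)) (hK : IsCompact K) (hKsub : K ⊆ Set.Ioi 0 ×ˢ Set.univ)
    (hgen : ∀ pq ∈ K, ∃ m : ℕ, 1 ≤ m ∧ m ≤ k ∧
      (-pq.1) ^ m * iteratedDeriv m (Function.invFun f) pq.2
        + iteratedDeriv m f 0 / pq.1 ≠ 0) :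
    ∃ η > (0 : ℝ), ∀ pq ∈ K,
      Set.encard {y ∈ Set.Icc (-η) η |
        Function.invFun f (pq.2 - pq.1 * y) + f y / pq.1 - pq.2 / pq.1 = 0}
        ≤ (k : ℕ∞) := by
  set g := Function.invFun f with hgdef
  have hg : ContDiff ℝ (k : ℕ∞) g := inv_contDiff k hk f hf hbij hpos
  -- local nonvanishing of some derivative, uniformly in a neighborhood
  have key : ∀ z ∈ K, ∃ ε > (0 : ℝ), ∃ m : ℕ, 1 ≤ m ∧ m ≤ k ∧
      ∀ y ∈ Set.Icc (-ε) ε, ∀ pq ∈ Metric.ball z ε,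
        (-pq.1) ^ m * iteratedDeriv m g (pq.2 - pq.1 * y)
          + iteratedDeriv m f y / pq.1 ≠ 0 := by
    intro z hz
    obtain ⟨m, hm1, hmk, hne⟩ := hgen z hz
    have hp0 : (0 : ℝ) < z.1 := (hKsub hz).1
    have hmk' : ((m : ℕ) : WithTop ℕ∞) ≤ ((k : ℕ∞) : WithTop ℕ∞) := by exact_mod_cast hmk
    have hgc : Continuous (iteratedDeriv m g) := hg.continuous_iteratedDeriv m hmk'
    have hfc : Continuous (iteratedDeriv m f) := hf.continuous_iteratedDeriv m hmk'
    set Φ : ℝ × (ℝ × ℝ) → ℝ := fun w =>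
      (-w.2.1) ^ m * iteratedDeriv m g (w.2.2 - w.2.1 * w.1)
        + iteratedDeriv m f w.1 / w.2.1 with hΦdef
    have hΦ : ContinuousAt Φ (0, z) := by
      apply ContinuousAt.add
      · exact (((continuous_snd.fst.neg.pow m).mul
          (hgc.comp (continuous_snd.snd.sub (continuous_snd.fst.mul
            continuous_fst)))).continuousAt)
      · exact ((hfc.comp continuous_fst).continuousAt).div
          continuous_snd.fst.continuousAt hp0.ne'
    have hval : Φ (0, z) ≠ 0 := by
      simpa [hΦdef] using hne
    have hev : ∀ᶠ w in 𝓝 ((0 : ℝ), z), Φ w ≠ 0 := hΦ.eventually_ne hval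
    rw [Metric.eventually_nhds_iff] at hev
    obtain ⟨ε, hε, hball⟩ := hev
    refine ⟨ε / 2, by positivity, m, hm1, hmk, ?_⟩
    intro y hy pq hpq
    show Φ (y, pq) ≠ 0
    apply hball
    rw [Prod.dist_eq]
    apply max_lt
    · rw [Real.dist_eq]
      have : |y| ≤ ε / 2 := abs_le.mpr ⟨hy.1, hy.2⟩
      simpa using lt_of_le_of_lt (by simpa using this) (by linarith)
    · exact lt_of_lt_of_le hpq (by linarith)
  choose ε hε m hm1 hmk hΦne using key
  obtain ⟨t, hcover⟩ := hK.elim_nhds_subcover'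
    (fun z hz => Metric.ball z (ε z hz)) (fun z hz => Metric.ball_mem_nhds _ (hε z hz))
  rcases Set.eq_empty_or_nonempty K with hKe | ⟨z₀, hz₀⟩
  · exact ⟨1, one_pos, fun pq hpq => absurd hpq (by simp [hKe])⟩
  have ht : t.Nonempty := by
    have := hcover hz₀
    simp only [Set.mem_iUnion] at this
    obtain ⟨x, hx, -⟩ := this
    exact ⟨x, hx⟩
  set η := t.inf' ht (fun x => ε x x.2) with hηdef
  have hη : 0 < η := by
    rw [hηdef, Finset.lt_inf'_iff]
    exact fun x hx => hε x x.2
  refine ⟨η, hη, fun pq hpq => ?_⟩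
  have := hcover hpq
  simp only [Set.mem_iUnion] at this
  obtain ⟨x, hxt, hxball⟩ := this
  have hηx : η ≤ ε x x.2 := Finset.inf'_le _ hxt
  set mm := m x x.2 with hmmdef
  have hmm1 : 1 ≤ mm := hm1 x x.2
  have hmmk : mm ≤ k := hmk x x.2
  have hcast : ((mm : ℕ) : WithTop ℕ∞) ≤ ((k : ℕ∞) : WithTop ℕ∞) := by exact_mod_cast hmmk
  have hgm : ContDiff ℝ (mm : ℕ∞) g := hg.of_le hcast
  have hfm : ContDiff ℝ (mm : ℕ∞) f := hf.of_le hcast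
  have hV : ContDiff ℝ (mm : ℕ∞)
      (fun y : ℝ => g (pq.2 - pq.1 * y) + f y / pq.1 - pq.2 / pq.1) :=
    ((hgm.comp (contDiff_const.sub (contDiff_const.mul contDiff_id))).add
      (hfm.div_const _)).sub contDiff_const
  have hne' : ∀ y ∈ Set.Icc (-η) η,
      iteratedDeriv mm (fun y : ℝ => g (pq.2 - pq.1 * y) + f y / pq.1 - pq.2 / pq.1) y ≠ 0 := by
    intro y hy
    rw [deriv_formula mm hmm1 g f hgm hfm pq.1 pq.2 y]
    exact hΦne x x.2 y ⟨le_trans (neg_le_neg hηx) hy.1, le_trans hy.2 hηx⟩ pq hxball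
  have hcount := card_zeros mm
    (fun y : ℝ => g (pq.2 - pq.1 * y) + f y / pq.1 - pq.2 / pq.1) hV (-η) η hne'
  refine le_trans ?_ (le_trans hcount (by exact_mod_cast hmmk))
  exact le_of_eq rfl
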